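/- arXiv:1301.3671 — 4 statements merged into one kernel-verified Lean document; each statement's English description precedes it below -/
import Mathlib

section
/- Let v ≥ 2 and let X ⊆ ℤ/vℤ. Define the sequence a_X = (a₀, …, a_{v−1}) of ±1 values by a_i = −1 if i ∈ X and a_i = 1 otherwise, and let [X] denote the v × v circulant matrix whose first row is a_X. If X, Y, Z, W ⊆ ℤ/vℤ form supplementary difference sets with parameters (v; x, y, z, w; λ) where λ = x + y + z + w − v, then [X][X]ᵀ + [Y][Y]ᵀ + [Z][Z]ᵀ + [W][W]ᵀ = 4v·I_v, where I_v is the v × v identity matrix. -/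
open Matrix

/-- `X 1, …, X t ⊆ ℤ/vℤ` are supplementary difference sets with parameters
`(v; k 1, …, k t; lam)`. -/
def IsSDS {v t : ℕ} (X : Fin t → Finset (ZMod v)) (k : Fin t → ℕ) (lam : ℕ) : Prop :=
  (∀ i, (X i).card = k i) ∧
  ∀ c : ZMod v, c ≠ 0 →
    (∑ i, ((X i ×ˢ X i).filter fun p => p.1 - p.2 = c).card) = lam

/-- The `v × v` circulant `±1` matrix `[X]` whose first row has entry `-1` in
position `j` if `j ∈ X` and `+1` otherwise, each subsequent row being the cyclic
shift of the previous one. -/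
def circMat {v : ℕ} (X : Finset (ZMod v)) : Matrix (ZMod v) (ZMod v) ℤ :=
  Matrix.of fun i j => if j - i ∈ X then -1 else 1

lemma card_shift {v : ℕ} [NeZero v] (X : Finset (ZMod v)) (i : ZMod v) :
    (Finset.univ.filter fun k => k - i ∈ X).card = X.card := by
  apply Finset.card_bij' (fun k _ => k - i) (fun a _ => a + i)
  · intro k hk; exact (Finset.mem_filter.mp hk).2
  · intro a ha; simp [ha]
  · intro k _; ring
  · intro a _; ring

lemma card_pairs {v : ℕ} [NeZero v] (X : Finset (ZMod v)) (i j : ZMod v) :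
    (Finset.univ.filter fun k => k - i ∈ X ∧ k - j ∈ X).card
      = ((X ×ˢ X).filter fun p => p.1 - p.2 = j - i).card := by
  apply Finset.card_bij' (fun k _ => (k - i, k - j)) (fun p _ => p.1 + i)
  · intro k hk
    obtain ⟨-, h1, h2⟩ := Finset.mem_filter.mp hk
    simp only [Finset.mem_filter, Finset.mem_product]
    exact ⟨⟨h1, h2⟩, by ring⟩
  · intro p hp
    obtain ⟨hm, he⟩ := Finset.mem_filter.mp hp
    rw [Finset.mem_product] at hm
    have h2 : p.1 + i - j = p.2 := by
      have := he; linear_combination he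
    simp only [Finset.mem_filter, Finset.mem_univ, true_and]
    constructor
    · simpa using hm.1
    · rw [h2]; exact hm.2
  · intro k _; ring
  · intro p hp
    obtain ⟨hm, he⟩ := Finset.mem_filter.mp hp
    have h2 : p.1 + i - j = p.2 := by linear_combination he
    have h1 : p.1 + i - i = p.1 := by ring
    ext <;> simp [h1, h2]

lemma entry_sum {v : ℕ} [NeZero v] (X : Finset (ZMod v)) (i j : ZMod v) :
    (circMat X * (circMat X)ᵀ) i j
      = (v : ℤ) - 4 * X.card
        + 4 * ((X ×ˢ X).filter fun p => p.1 - p.2 = j - i).card := by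
  have key : ∀ k : ZMod v,
      (circMat X) i k * (circMat X)ᵀ k j
        = 1 - 2 * (if k - i ∈ X then (1:ℤ) else 0)
            - 2 * (if k - j ∈ X then (1:ℤ) else 0)
            + 4 * (if k - i ∈ X ∧ k - j ∈ X then (1:ℤ) else 0) := by
    intro k
    simp only [circMat, transpose_apply, Matrix.of_apply]
    by_cases h1 : k - i ∈ X <;> by_cases h2 : k - j ∈ X <;>
      simp [h1, h2]
  rw [Matrix.mul_apply]
  simp only [key]
  rw [Finset.sum_add_distrib, Finset.sum_sub_distrib, Finset.sum_sub_distrib,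
    ← Finset.mul_sum, ← Finset.mul_sum, ← Finset.mul_sum,
    Finset.sum_boole, Finset.sum_boole, Finset.sum_boole]
  rw [card_shift, card_shift, card_pairs]
  simp [ZMod.card, Finset.card_univ]
  ring

lemma card_diag {v : ℕ} (X : Finset (ZMod v)) :
    ((X ×ˢ X).filter fun p => p.1 - p.2 = 0).card = X.card := by
  have he : (X ×ˢ X).filter (fun p => p.1 - p.2 = 0) = X.image (fun a => (a, a)) := by
    ext ⟨a, b⟩
    simp only [Finset.mem_filter, Finset.mem_product, Finset.mem_image, sub_eq_zero,
      Prod.mk.injEq]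
    aesop
  rw [he, Finset.card_image_of_injective]
  intro a b hab
  exact (Prod.ext_iff.mp hab).1

theorem stmt2 {v : ℕ} [NeZero v] (hv : 2 ≤ v) (X Y Z W : Finset (ZMod v))
    (x y z w lam : ℕ) (hlam : (lam : ℤ) = (x : ℤ) + y + z + w - v)
    (h : IsSDS ![X, Y, Z, W] ![x, y, z, w] lam) :
    circMat X * (circMat X)ᵀ + circMat Y * (circMat Y)ᵀ +
      circMat Z * (circMat Z)ᵀ + circMat W * (circMat W)ᵀ =
      (4 * v : ℤ) • (1 : Matrix (ZMod v) (ZMod v) ℤ) := by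
  obtain ⟨hcard, hsds⟩ := h
  have hX : X.card = x := hcard 0
  have hY : Y.card = y := hcard 1
  have hZ : Z.card = z := hcard 2
  have hW : W.card = w := hcard 3
  ext i j
  simp only [Matrix.add_apply, Matrix.smul_apply, Matrix.one_apply, smul_eq_mul]
  rw [entry_sum, entry_sum, entry_sum, entry_sum, hX, hY, hZ, hW]
  by_cases hij : i = j
  · subst hij
    rw [if_pos rfl]
    simp only [sub_self, card_diag, hX, hY, hZ, hW]
    ring
  · have hc : j - i ≠ 0 := sub_ne_zero.mpr (Ne.symm hij)
    have hs := hsds (j - i) hc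
    rw [Fin.sum_univ_four] at hs
    simp only [Matrix.cons_val_zero, Matrix.cons_val_one, Matrix.head_cons,
      Matrix.cons_val_two, Matrix.tail_cons, Matrix.cons_val_three,
      Matrix.head_fin_const] at hs
    have hs' : (((X ×ˢ X).filter fun p => p.1 - p.2 = j - i).card : ℤ)
        + ((Y ×ˢ Y).filter fun p => p.1 - p.2 = j - i).card
        + ((Z ×ˢ Z).filter fun p => p.1 - p.2 = j - i).card
        + ((W ×ˢ W).filter fun p => p.1 - p.2 = j - i).card = (lam : ℤ) := by
      exact_mod_cast hs
    rw [if_neg hij]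
    linarith [hs', hlam]
end

section
/- Let v ≥ 1 and let P₁, P₂, P₃, P₄ be v × v circulant matrices with entries in {+1, −1} satisfying P₁P₁ᵀ + P₂P₂ᵀ + P₃P₃ᵀ + P₄P₄ᵀ = 4v·I_v. Let R be the v × v matrix with ones on the back-diagonal (R_{ij} = 1 if i + j ≡ v − 1, and 0 otherwise). Then the 4v × 4v block matrix H = [[P₁, P₂R, P₃R, P₄R], [−P₂R, P₁, −P₄ᵀR, P₃ᵀR], [−P₃R, P₄ᵀR, P₁, −P₂ᵀR], [−P₄R, −P₃ᵀR, P₂ᵀR, P₁]] (the Goethals–Seidel array) is a Hadamard matrix of order 4v, i.e., all entries of H are ±1 and H·Hᵀ = 4v·I_{4v}. -/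
open Matrix

/-- The 4×4 array of `v × v` blocks of the Goethals–Seidel array
`[[P₁, P₂R, P₃R, P₄R], [−P₂R, P₁, −P₄ᵀR, P₃ᵀR],
  [−P₃R, P₄ᵀR, P₁, −P₂ᵀR], [−P₄R, −P₃ᵀR, P₂ᵀR, P₁]]`
(here `P 0, P 1, P 2, P 3` play the roles of `P₁, P₂, P₃, P₄`). -/
def GSblock {v : ℕ} [NeZero v] (P : Fin 4 → Matrix (ZMod v) (ZMod v) ℤ)
    (R : Matrix (ZMod v) (ZMod v) ℤ) : Fin 4 → Fin 4 → Matrix (ZMod v) (ZMod v) ℤ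
  | 0, 0 => P 0
  | 0, 1 => P 1 * R
  | 0, 2 => P 2 * R
  | 0, 3 => P 3 * R
  | 1, 0 => -(P 1 * R)
  | 1, 1 => P 0
  | 1, 2 => -((P 3)ᵀ * R)
  | 1, 3 => (P 2)ᵀ * R
  | 2, 0 => -(P 2 * R)
  | 2, 1 => (P 3)ᵀ * R
  | 2, 2 => P 0
  | 2, 3 => -((P 1)ᵀ * R)
  | 3, 0 => -(P 3 * R)
  | 3, 1 => -((P 2)ᵀ * R)
  | 3, 2 => (P 1)ᵀ * R
  | 3, 3 => P 0

/-- The Goethals–Seidel array as a `4v × 4v` matrix, indexed by `Fin 4 × ZMod v`. -/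
def GSmatrix {v : ℕ} [NeZero v] (P : Fin 4 → Matrix (ZMod v) (ZMod v) ℤ)
    (R : Matrix (ZMod v) (ZMod v) ℤ) :
    Matrix (Fin 4 × ZMod v) (Fin 4 × ZMod v) ℤ :=
  Matrix.of fun p q => GSblock P R p.1 q.1 p.2 q.2

theorem stmt3 {v : ℕ} [NeZero v] (hv : 1 ≤ v)
    (P : Fin 4 → Matrix (ZMod v) (ZMod v) ℤ)
    (hcirc : ∀ i, ∃ c : ZMod v → ℤ, P i = Matrix.circulant c)
    (hpm : ∀ i a b, P i a b = 1 ∨ P i a b = -1)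
    (hsum : P 0 * (P 0)ᵀ + P 1 * (P 1)ᵀ + P 2 * (P 2)ᵀ + P 3 * (P 3)ᵀ =
      (4 * v : ℤ) • (1 : Matrix (ZMod v) (ZMod v) ℤ))
    (R : Matrix (ZMod v) (ZMod v) ℤ)
    (hR : ∀ i j : ZMod v, R i j = if i + j = (v : ZMod v) - 1 then 1 else 0) :
    (∀ p q, GSmatrix P R p q = 1 ∨ GSmatrix P R p q = -1) ∧
      GSmatrix P R * (GSmatrix P R)ᵀ =
        (4 * v : ℤ) • (1 : Matrix (Fin 4 × ZMod v) (Fin 4 × ZMod v) ℤ) := by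
  -- basic facts about R
  have mulR : ∀ (X : Matrix (ZMod v) (ZMod v) ℤ) (a b : ZMod v),
      (X * R) a b = X a (-1 - b) := by
    intro X a b
    rw [mul_apply, Finset.sum_eq_single (-1 - b)]
    · rw [hR, ZMod.natCast_self, if_pos (by ring), mul_one]
    · intro k _ hk
      rw [hR, ZMod.natCast_self, if_neg, mul_zero]
      intro h
      exact hk (by rw [eq_sub_of_add_eq h]; ring)
    · simp
  have hRsymm : Rᵀ = R := by
    ext a b
    rw [transpose_apply, hR, hR, add_comm]
  have hRR1 : R * R = 1 := by
    ext a b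
    rw [mulR, hR, ZMod.natCast_self, one_apply]
    congr 1
    simp only [eq_iff_iff]
    constructor
    · intro h; exact sub_eq_zero.mp (by linear_combination h)
    · intro h; rw [h]; ring
  have hRR : ∀ X : Matrix (ZMod v) (ZMod v) ℤ, R * (R * X) = X := by
    intro X; rw [← Matrix.mul_assoc, hRR1, Matrix.one_mul]
  -- circulant facts
  have hcircT : ∀ i, ∃ c : ZMod v → ℤ, (P i)ᵀ = Matrix.circulant c := by
    intro i
    obtain ⟨c, hc⟩ := hcirc i
    exact ⟨fun x => c (-x), by rw [hc, transpose_circulant]⟩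
  have hcommG : ∀ (X Y : Matrix (ZMod v) (ZMod v) ℤ),
      (∃ c, X = Matrix.circulant c) → (∃ c, Y = Matrix.circulant c) → X * Y = Y * X := by
    rintro X Y ⟨c, rfl⟩ ⟨d, rfl⟩
    exact circulant_mul_comm c d
  have hXR : ∀ (X : Matrix (ZMod v) (ZMod v) ℤ),
      (∃ c, X = Matrix.circulant c) → X * R = R * Xᵀ := by
    rintro X ⟨c, rfl⟩
    have hsym : Matrix.circulant c * R = (Matrix.circulant c * R)ᵀ := by
      ext a b
      rw [transpose_apply, mulR, mulR, circulant_apply, circulant_apply]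
      congr 1; ring
    rw [hsym, transpose_mul, hRsymm]
  have hTcirc : ∀ (X : Matrix (ZMod v) (ZMod v) ℤ),
      (∃ c, X = Matrix.circulant c) → (∃ c, Xᵀ = Matrix.circulant c) := by
    rintro X ⟨c, rfl⟩
    exact ⟨fun x => c (-x), by rw [transpose_circulant]⟩
  -- the key cancellation lemmas
  have hcancN : ∀ (X Y : Matrix (ZMod v) (ZMod v) ℤ),
      (∃ c, X = Matrix.circulant c) → (∃ c, Y = Matrix.circulant c) →
      X * (R * Y) = Yᵀ * (R * Xᵀ) := by
    intro X Y hX hY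
    calc X * (R * Y) = (X * R) * Y := by rw [Matrix.mul_assoc]
      _ = (R * Xᵀ) * Y := by rw [hXR X hX]
      _ = R * (Xᵀ * Y) := by rw [Matrix.mul_assoc]
      _ = R * (Y * Xᵀ) := by rw [hcommG Xᵀ Y (hTcirc X hX) hY]
      _ = (R * Y) * Xᵀ := by rw [Matrix.mul_assoc]
      _ = (Yᵀ * R) * Xᵀ := by rw [hXR Yᵀ (hTcirc Y hY), transpose_transpose]
      _ = Yᵀ * (R * Xᵀ) := by rw [Matrix.mul_assoc]
  have hcancT : ∀ (X Y : Matrix (ZMod v) (ZMod v) ℤ),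
      (∃ c, X = Matrix.circulant c) → (∃ c, Y = Matrix.circulant c) →
      X * (R * Yᵀ) = Y * (R * Xᵀ) := by
    intro X Y hX hY
    rw [hcancN X Yᵀ hX (hTcirc Y hY), transpose_transpose]
  -- the sixteen block identities
  have c0 := hcirc 0; have c1 := hcirc 1; have c2 := hcirc 2; have c3 := hcirc 3
  have t0 := hcircT 0; have t1 := hcircT 1; have t2 := hcircT 2; have t3 := hcircT 3
  have key : ∀ p q : Fin 4,
      (∑ k : Fin 4, GSblock P R p k * (GSblock P R q k)ᵀ) =
        if p = q then (4 * v : ℤ) • (1 : Matrix (ZMod v) (ZMod v) ℤ) else 0 := by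
    have h00 : (P 0) * ((P 0))ᵀ + (P 1 * R) * ((P 1 * R))ᵀ + (P 2 * R) * ((P 2 * R))ᵀ + (P 3 * R) * ((P 3 * R))ᵀ =
        (4 * v : ℤ) • (1 : Matrix (ZMod v) (ZMod v) ℤ) := by
      simp only [transpose_neg, transpose_mul, transpose_transpose, hRsymm,
        neg_mul, mul_neg, neg_neg, Matrix.mul_assoc, hRR]
      exact hsum
    have h01 : (P 0) * ((-(P 1 * R)))ᵀ + (P 1 * R) * ((P 0))ᵀ + (P 2 * R) * ((-((P 3)ᵀ * R)))ᵀ + (P 3 * R) * (((P 2)ᵀ * R))ᵀ =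
        (0 : Matrix (ZMod v) (ZMod v) ℤ) := by
      simp only [transpose_neg, transpose_mul, transpose_transpose, hRsymm,
        neg_mul, mul_neg, neg_neg, Matrix.mul_assoc, hRR]
      rw [hcancT (P 0) (P 1) c0 c1, hcommG (P 2) (P 3) c2 c3]; abel
    have h02 : (P 0) * ((-(P 2 * R)))ᵀ + (P 1 * R) * (((P 3)ᵀ * R))ᵀ + (P 2 * R) * ((P 0))ᵀ + (P 3 * R) * ((-((P 1)ᵀ * R)))ᵀ =
        (0 : Matrix (ZMod v) (ZMod v) ℤ) := by
      simp only [transpose_neg, transpose_mul, transpose_transpose, hRsymm,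
        neg_mul, mul_neg, neg_neg, Matrix.mul_assoc, hRR]
      rw [hcancT (P 0) (P 2) c0 c2, hcommG (P 1) (P 3) c1 c3]; abel
    have h03 : (P 0) * ((-(P 3 * R)))ᵀ + (P 1 * R) * ((-((P 2)ᵀ * R)))ᵀ + (P 2 * R) * (((P 1)ᵀ * R))ᵀ + (P 3 * R) * ((P 0))ᵀ =
        (0 : Matrix (ZMod v) (ZMod v) ℤ) := by
      simp only [transpose_neg, transpose_mul, transpose_transpose, hRsymm,
        neg_mul, mul_neg, neg_neg, Matrix.mul_assoc, hRR]
      rw [hcancT (P 0) (P 3) c0 c3, hcommG (P 1) (P 2) c1 c2]; abel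
    have h10 : (-(P 1 * R)) * ((P 0))ᵀ + (P 0) * ((P 1 * R))ᵀ + (-((P 3)ᵀ * R)) * ((P 2 * R))ᵀ + ((P 2)ᵀ * R) * ((P 3 * R))ᵀ =
        (0 : Matrix (ZMod v) (ZMod v) ℤ) := by
      simp only [transpose_neg, transpose_mul, transpose_transpose, hRsymm,
        neg_mul, mul_neg, neg_neg, Matrix.mul_assoc, hRR]
      rw [hcancT (P 0) (P 1) c0 c1, hcommG ((P 2)ᵀ) ((P 3)ᵀ) t2 t3]; abel
    have h11 : (-(P 1 * R)) * ((-(P 1 * R)))ᵀ + (P 0) * ((P 0))ᵀ + (-((P 3)ᵀ * R)) * ((-((P 3)ᵀ * R)))ᵀ + ((P 2)ᵀ * R) * (((P 2)ᵀ * R))ᵀ =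
        (4 * v : ℤ) • (1 : Matrix (ZMod v) (ZMod v) ℤ) := by
      simp only [transpose_neg, transpose_mul, transpose_transpose, hRsymm,
        neg_mul, mul_neg, neg_neg, Matrix.mul_assoc, hRR]
      rw [hcommG ((P 3)ᵀ) (P 3) t3 c3, hcommG ((P 2)ᵀ) (P 2) t2 c2, ← hsum]; abel
    have h12 : (-(P 1 * R)) * ((-(P 2 * R)))ᵀ + (P 0) * (((P 3)ᵀ * R))ᵀ + (-((P 3)ᵀ * R)) * ((P 0))ᵀ + ((P 2)ᵀ * R) * ((-((P 1)ᵀ * R)))ᵀ =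
        (0 : Matrix (ZMod v) (ZMod v) ℤ) := by
      simp only [transpose_neg, transpose_mul, transpose_transpose, hRsymm,
        neg_mul, mul_neg, neg_neg, Matrix.mul_assoc, hRR]
      rw [hcancN (P 0) (P 3) c0 c3, hcommG (P 1) ((P 2)ᵀ) c1 t2]; abel
    have h13 : (-(P 1 * R)) * ((-(P 3 * R)))ᵀ + (P 0) * ((-((P 2)ᵀ * R)))ᵀ + (-((P 3)ᵀ * R)) * (((P 1)ᵀ * R))ᵀ + ((P 2)ᵀ * R) * ((P 0))ᵀ =
        (0 : Matrix (ZMod v) (ZMod v) ℤ) := by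
      simp only [transpose_neg, transpose_mul, transpose_transpose, hRsymm,
        neg_mul, mul_neg, neg_neg, Matrix.mul_assoc, hRR]
      rw [hcancN (P 0) (P 2) c0 c2, hcommG (P 1) ((P 3)ᵀ) c1 t3]; abel
    have h20 : (-(P 2 * R)) * ((P 0))ᵀ + ((P 3)ᵀ * R) * ((P 1 * R))ᵀ + (P 0) * ((P 2 * R))ᵀ + (-((P 1)ᵀ * R)) * ((P 3 * R))ᵀ =
        (0 : Matrix (ZMod v) (ZMod v) ℤ) := by
      simp only [transpose_neg, transpose_mul, transpose_transpose, hRsymm,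
        neg_mul, mul_neg, neg_neg, Matrix.mul_assoc, hRR]
      rw [hcancT (P 0) (P 2) c0 c2, hcommG ((P 1)ᵀ) ((P 3)ᵀ) t1 t3]; abel
    have h21 : (-(P 2 * R)) * ((-(P 1 * R)))ᵀ + ((P 3)ᵀ * R) * ((P 0))ᵀ + (P 0) * ((-((P 3)ᵀ * R)))ᵀ + (-((P 1)ᵀ * R)) * (((P 2)ᵀ * R))ᵀ =
        (0 : Matrix (ZMod v) (ZMod v) ℤ) := by
      simp only [transpose_neg, transpose_mul, transpose_transpose, hRsymm,
        neg_mul, mul_neg, neg_neg, Matrix.mul_assoc, hRR]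
      rw [hcancN (P 0) (P 3) c0 c3, hcommG (P 2) ((P 1)ᵀ) c2 t1]; abel
    have h22 : (-(P 2 * R)) * ((-(P 2 * R)))ᵀ + ((P 3)ᵀ * R) * (((P 3)ᵀ * R))ᵀ + (P 0) * ((P 0))ᵀ + (-((P 1)ᵀ * R)) * ((-((P 1)ᵀ * R)))ᵀ =
        (4 * v : ℤ) • (1 : Matrix (ZMod v) (ZMod v) ℤ) := by
      simp only [transpose_neg, transpose_mul, transpose_transpose, hRsymm,
        neg_mul, mul_neg, neg_neg, Matrix.mul_assoc, hRR]
      rw [hcommG ((P 3)ᵀ) (P 3) t3 c3, hcommG ((P 1)ᵀ) (P 1) t1 c1, ← hsum]; abel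
    have h23 : (-(P 2 * R)) * ((-(P 3 * R)))ᵀ + ((P 3)ᵀ * R) * ((-((P 2)ᵀ * R)))ᵀ + (P 0) * (((P 1)ᵀ * R))ᵀ + (-((P 1)ᵀ * R)) * ((P 0))ᵀ =
        (0 : Matrix (ZMod v) (ZMod v) ℤ) := by
      simp only [transpose_neg, transpose_mul, transpose_transpose, hRsymm,
        neg_mul, mul_neg, neg_neg, Matrix.mul_assoc, hRR]
      rw [hcancN (P 0) (P 1) c0 c1, hcommG (P 2) ((P 3)ᵀ) c2 t3]; abel
    have h30 : (-(P 3 * R)) * ((P 0))ᵀ + (-((P 2)ᵀ * R)) * ((P 1 * R))ᵀ + ((P 1)ᵀ * R) * ((P 2 * R))ᵀ + (P 0) * ((P 3 * R))ᵀ =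
        (0 : Matrix (ZMod v) (ZMod v) ℤ) := by
      simp only [transpose_neg, transpose_mul, transpose_transpose, hRsymm,
        neg_mul, mul_neg, neg_neg, Matrix.mul_assoc, hRR]
      rw [hcancT (P 0) (P 3) c0 c3, hcommG ((P 1)ᵀ) ((P 2)ᵀ) t1 t2]; abel
    have h31 : (-(P 3 * R)) * ((-(P 1 * R)))ᵀ + (-((P 2)ᵀ * R)) * ((P 0))ᵀ + ((P 1)ᵀ * R) * ((-((P 3)ᵀ * R)))ᵀ + (P 0) * (((P 2)ᵀ * R))ᵀ =
        (0 : Matrix (ZMod v) (ZMod v) ℤ) := by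
      simp only [transpose_neg, transpose_mul, transpose_transpose, hRsymm,
        neg_mul, mul_neg, neg_neg, Matrix.mul_assoc, hRR]
      rw [hcancN (P 0) (P 2) c0 c2, hcommG (P 3) ((P 1)ᵀ) c3 t1]; abel
    have h32 : (-(P 3 * R)) * ((-(P 2 * R)))ᵀ + (-((P 2)ᵀ * R)) * (((P 3)ᵀ * R))ᵀ + ((P 1)ᵀ * R) * ((P 0))ᵀ + (P 0) * ((-((P 1)ᵀ * R)))ᵀ =
        (0 : Matrix (ZMod v) (ZMod v) ℤ) := by
      simp only [transpose_neg, transpose_mul, transpose_transpose, hRsymm,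
        neg_mul, mul_neg, neg_neg, Matrix.mul_assoc, hRR]
      rw [hcancN (P 0) (P 1) c0 c1, hcommG (P 3) ((P 2)ᵀ) c3 t2]; abel
    have h33 : (-(P 3 * R)) * ((-(P 3 * R)))ᵀ + (-((P 2)ᵀ * R)) * ((-((P 2)ᵀ * R)))ᵀ + ((P 1)ᵀ * R) * (((P 1)ᵀ * R))ᵀ + (P 0) * ((P 0))ᵀ =
        (4 * v : ℤ) • (1 : Matrix (ZMod v) (ZMod v) ℤ) := by
      simp only [transpose_neg, transpose_mul, transpose_transpose, hRsymm,
        neg_mul, mul_neg, neg_neg, Matrix.mul_assoc, hRR]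
      rw [hcommG ((P 2)ᵀ) (P 2) t2 c2, hcommG ((P 1)ᵀ) (P 1) t1 c1, ← hsum]; abel

    intro p q
    fin_cases p <;> fin_cases q <;> rw [Fin.sum_univ_four] <;>
      [(rw [if_pos rfl]; exact h00);
       (rw [if_neg (by decide)]; exact h01);
       (rw [if_neg (by decide)]; exact h02);
       (rw [if_neg (by decide)]; exact h03);
       (rw [if_neg (by decide)]; exact h10);
       (rw [if_pos rfl]; exact h11);
       (rw [if_neg (by decide)]; exact h12);
       (rw [if_neg (by decide)]; exact h13);
       (rw [if_neg (by decide)]; exact h20);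
       (rw [if_neg (by decide)]; exact h21);
       (rw [if_pos rfl]; exact h22);
       (rw [if_neg (by decide)]; exact h23);
       (rw [if_neg (by decide)]; exact h30);
       (rw [if_neg (by decide)]; exact h31);
       (rw [if_neg (by decide)]; exact h32);
       (rw [if_pos rfl]; exact h33)]
  constructor
  · -- entries are ±1
    have pmR : ∀ (X : Matrix (ZMod v) (ZMod v) ℤ),
        (∀ a b, X a b = 1 ∨ X a b = -1) → ∀ a b : ZMod v,
        ((X * R) a b = 1 ∨ (X * R) a b = -1) ∧
        ((-(X * R)) a b = 1 ∨ (-(X * R)) a b = -1) := by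
      intro X hX a b
      rw [Matrix.neg_apply, mulR]
      rcases hX a (-1 - b) with h | h <;> rw [h] <;> constructor <;> simp
    have pmT : ∀ i, ∀ a b : ZMod v, (P i)ᵀ a b = 1 ∨ (P i)ᵀ a b = -1 :=
      fun i a b => hpm i b a
    rintro ⟨i, a⟩ ⟨j, b⟩
    show GSblock P R i j a b = 1 ∨ GSblock P R i j a b = -1
    fin_cases i <;> fin_cases j <;>
      [exact hpm 0 a b;
       exact (pmR (P 1) (hpm 1) a b).1;
       exact (pmR (P 2) (hpm 2) a b).1;
       exact (pmR (P 3) (hpm 3) a b).1;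
       exact (pmR (P 1) (hpm 1) a b).2;
       exact hpm 0 a b;
       exact (pmR ((P 3)ᵀ) (pmT 3) a b).2;
       exact (pmR ((P 2)ᵀ) (pmT 2) a b).1;
       exact (pmR (P 2) (hpm 2) a b).2;
       exact (pmR ((P 3)ᵀ) (pmT 3) a b).1;
       exact hpm 0 a b;
       exact (pmR ((P 1)ᵀ) (pmT 1) a b).2;
       exact (pmR (P 3) (hpm 3) a b).2;
       exact (pmR ((P 2)ᵀ) (pmT 2) a b).2;
       exact (pmR ((P 1)ᵀ) (pmT 1) a b).1;
       exact hpm 0 a b]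
  · -- H Hᵀ = 4v I
    ext ⟨i, a⟩ ⟨j, b⟩
    have lhs_eq : (GSmatrix P R * (GSmatrix P R)ᵀ) (i, a) (j, b) =
        (∑ k : Fin 4, GSblock P R i k * (GSblock P R j k)ᵀ) a b := by
      rw [mul_apply, Fintype.sum_prod_type, Matrix.sum_apply]
      refine Finset.sum_congr rfl fun k _ => ?_
      rw [mul_apply]
      refine Finset.sum_congr rfl fun c _ => ?_
      rfl
    rw [lhs_eq, key i j]
    by_cases h : i = j
    · subst h
      rw [if_pos rfl]
      rcases eq_or_ne a b with hab | hab <;>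
        simp [Matrix.one_apply, Prod.ext_iff, hab]
    · rw [if_neg h]
      simp [Matrix.one_apply, Prod.ext_iff, h]
end

section
/- Let v be an odd positive integer and suppose there exist subsets X₁, X₂, X₃, X₄ of ℤ/vℤ forming supplementary difference sets with parameters (v; k₁, k₂, k₃, k₄; λ) where λ = k₁ + k₂ + k₃ + k₄ − v, such that X₁ is a skew subset of ℤ/vℤ, i.e., for each nonzero i ∈ ℤ/vℤ exactly one of i and v − i belongs to X₁. Then there exists a skew-Hadamard matrix of order 4v, i.e., a Hadamard matrix H of order 4v satisfying H + Hᵀ = 2·I_{4v}. -/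
open Matrix

namespace GSaux
open Finset
variable {v : ℕ} [NeZero v]

noncomputable def corr (f g : ZMod v → ℤ) : ZMod v → ℤ := fun c => ∑ w, f w * g (w - c)
noncomputable def conv (f g : ZMod v → ℤ) : ZMod v → ℤ := fun s => ∑ w, f w * g (s - w)
def ng (f : ZMod v → ℤ) : ZMod v → ℤ := fun t => f (-t)
def circ (f : ZMod v → ℤ) : Matrix (ZMod v) (ZMod v) ℤ := Matrix.of fun x y => f (x - y)
def bcirc (f : ZMod v → ℤ) : Matrix (ZMod v) (ZMod v) ℤ := Matrix.of fun x y => f (x + y)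

omit [NeZero v] in
@[simp] lemma bcirc_transpose (f : ZMod v → ℤ) : (bcirc f)ᵀ = bcirc f := by
  ext x y; simp [bcirc, transpose_apply, add_comm]

lemma conv_comm (f g : ZMod v → ℤ) : conv f g = conv g f := by
  funext s
  simp only [conv]
  refine Fintype.sum_equiv (Equiv.subLeft s) _ _ fun w => ?_
  simp only [Equiv.subLeft_apply]
  rw [mul_comm, sub_sub_cancel]

@[simp] lemma corr_ng_ng (f g : ZMod v → ℤ) : corr (ng f) (ng g) = corr g f := by
  funext c
  simp only [corr, ng]
  refine Fintype.sum_equiv (Equiv.subLeft c) _ _ fun w => ?_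
  simp only [Equiv.subLeft_apply]
  rw [mul_comm]
  congr 2
  · abel
  · abel

@[simp] lemma corr_ng_right (f g : ZMod v → ℤ) : corr f (ng g) = conv f g := by
  funext c
  simp only [corr, conv, ng]
  refine Finset.sum_congr rfl fun w _ => ?_
  congr 1
  abel

@[simp] lemma corr_ng_left (f g : ZMod v → ℤ) : corr (ng f) g = ng (conv f g) := by
  funext c
  simp only [corr, conv, ng]
  refine Fintype.sum_equiv (Equiv.neg _) _ _ fun w => ?_
  simp only [Equiv.neg_apply]
  congr 1
  abel

@[simp] lemma conv_ng_left (f g : ZMod v → ℤ) : conv (ng f) g = corr g f := by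
  funext s
  simp only [conv, corr, ng]
  refine Fintype.sum_equiv (Equiv.subLeft s) _ _ fun w => ?_
  simp only [Equiv.subLeft_apply]
  rw [mul_comm]
  congr 2
  abel

@[simp] lemma mul1 (f g : ZMod v → ℤ) : circ f * (circ g)ᵀ = circ (corr f g) := by
  ext x y
  simp only [mul_apply, circ, transpose_apply, of_apply, corr]
  refine Fintype.sum_equiv (Equiv.subLeft x) _ _ fun z => ?_
  simp only [Equiv.subLeft_apply]
  congr 2 <;> abel

@[simp] lemma mul2 (f g : ZMod v → ℤ) : bcirc f * bcirc g = circ (corr f g) := by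
  ext x y
  simp only [mul_apply, circ, bcirc, of_apply, corr]
  refine Fintype.sum_equiv (Equiv.addLeft x) _ _ fun z => ?_
  simp only [Equiv.coe_addLeft]
  congr 2 <;> abel

@[simp] lemma mul3 (f g : ZMod v → ℤ) : circ f * bcirc g = bcirc (conv f g) := by
  ext x y
  simp only [mul_apply, circ, bcirc, of_apply, conv]
  refine Fintype.sum_equiv (Equiv.subLeft x) _ _ fun z => ?_
  simp only [Equiv.subLeft_apply]
  congr 2 <;> abel

@[simp] lemma mul4 (f g : ZMod v → ℤ) : bcirc g * (circ f)ᵀ = bcirc (conv f g) := by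
  ext x y
  simp only [mul_apply, circ, bcirc, transpose_apply, of_apply, conv]
  refine Fintype.sum_equiv (Equiv.subLeft y) _ _ fun z => ?_
  simp only [Equiv.subLeft_apply]
  rw [mul_comm]
  congr 2
  all_goals abel

noncomputable def B (f : Fin 4 → ZMod v → ℤ) : Fin 4 → Fin 4 → Matrix (ZMod v) (ZMod v) ℤ :=
  ![![circ (f 0), bcirc (f 1), bcirc (f 2), bcirc (f 3)],
    ![-bcirc (f 1), circ (f 0), -bcirc (ng (f 3)), bcirc (ng (f 2))],
    ![-bcirc (f 2), bcirc (ng (f 3)), circ (f 0), -bcirc (ng (f 1))],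
    ![-bcirc (f 3), -bcirc (ng (f 2)), bcirc (ng (f 1)), circ (f 0)]]

@[simp] lemma Bev00 (f : Fin 4 → ZMod v → ℤ) : B f 0 0 = circ (f 0) := rfl

@[simp] lemma Bev01 (f : Fin 4 → ZMod v → ℤ) : B f 0 1 = bcirc (f 1) := rfl

@[simp] lemma Bev02 (f : Fin 4 → ZMod v → ℤ) : B f 0 2 = bcirc (f 2) := rfl

@[simp] lemma Bev03 (f : Fin 4 → ZMod v → ℤ) : B f 0 3 = bcirc (f 3) := rfl

@[simp] lemma Bev10 (f : Fin 4 → ZMod v → ℤ) : B f 1 0 = -bcirc (f 1) := rfl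

@[simp] lemma Bev11 (f : Fin 4 → ZMod v → ℤ) : B f 1 1 = circ (f 0) := rfl

@[simp] lemma Bev12 (f : Fin 4 → ZMod v → ℤ) : B f 1 2 = -bcirc (ng (f 3)) := rfl

@[simp] lemma Bev13 (f : Fin 4 → ZMod v → ℤ) : B f 1 3 = bcirc (ng (f 2)) := rfl

@[simp] lemma Bev20 (f : Fin 4 → ZMod v → ℤ) : B f 2 0 = -bcirc (f 2) := rfl

@[simp] lemma Bev21 (f : Fin 4 → ZMod v → ℤ) : B f 2 1 = bcirc (ng (f 3)) := rfl

@[simp] lemma Bev22 (f : Fin 4 → ZMod v → ℤ) : B f 2 2 = circ (f 0) := rfl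

@[simp] lemma Bev23 (f : Fin 4 → ZMod v → ℤ) : B f 2 3 = -bcirc (ng (f 1)) := rfl

@[simp] lemma Bev30 (f : Fin 4 → ZMod v → ℤ) : B f 3 0 = -bcirc (f 3) := rfl

@[simp] lemma Bev31 (f : Fin 4 → ZMod v → ℤ) : B f 3 1 = -bcirc (ng (f 2)) := rfl

@[simp] lemma Bev32 (f : Fin 4 → ZMod v → ℤ) : B f 3 2 = bcirc (ng (f 1)) := rfl

@[simp] lemma Bev33 (f : Fin 4 → ZMod v → ℤ) : B f 3 3 = circ (f 0) := rfl

lemma rd00 (f : Fin 4 → ZMod v → ℤ) :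
    ∑ c, B f 0 c * (B f 0 c)ᵀ = circ (corr (f 0) (f 0)) + circ (corr (f 1) (f 1)) + circ (corr (f 2) (f 2)) + circ (corr (f 3) (f 3)) := by
  simp only [Fin.sum_univ_four, Bev00, Bev01, Bev02, Bev03, Bev00, Bev01, Bev02, Bev03,
    transpose_neg, bcirc_transpose, neg_mul, mul_neg, neg_neg,
    mul1, mul2, mul3, mul4, corr_ng_ng, corr_ng_right, corr_ng_left, conv_ng_left,
    conv_comm (f 3) (f 1), conv_comm (f 2) (f 1), conv_comm (f 3) (f 2),
    conv_comm (f 1) (f 0), conv_comm (f 2) (f 0), conv_comm (f 3) (f 0),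
    conv_comm (ng (f 1)) (f 0), conv_comm (ng (f 2)) (f 0), conv_comm (ng (f 3)) (f 0)]
  try abel

lemma rd01 (f : Fin 4 → ZMod v → ℤ) :
    ∑ c, B f 0 c * (B f 1 c)ᵀ = 0 := by
  simp only [Fin.sum_univ_four, Bev00, Bev01, Bev02, Bev03, Bev10, Bev11, Bev12, Bev13,
    transpose_neg, bcirc_transpose, neg_mul, mul_neg, neg_neg,
    mul1, mul2, mul3, mul4, corr_ng_ng, corr_ng_right, corr_ng_left, conv_ng_left,
    conv_comm (f 3) (f 1), conv_comm (f 2) (f 1), conv_comm (f 3) (f 2),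
    conv_comm (f 1) (f 0), conv_comm (f 2) (f 0), conv_comm (f 3) (f 0),
    conv_comm (ng (f 1)) (f 0), conv_comm (ng (f 2)) (f 0), conv_comm (ng (f 3)) (f 0)]
  try abel

lemma rd02 (f : Fin 4 → ZMod v → ℤ) :
    ∑ c, B f 0 c * (B f 2 c)ᵀ = 0 := by
  simp only [Fin.sum_univ_four, Bev00, Bev01, Bev02, Bev03, Bev20, Bev21, Bev22, Bev23,
    transpose_neg, bcirc_transpose, neg_mul, mul_neg, neg_neg,
    mul1, mul2, mul3, mul4, corr_ng_ng, corr_ng_right, corr_ng_left, conv_ng_left,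
    conv_comm (f 3) (f 1), conv_comm (f 2) (f 1), conv_comm (f 3) (f 2),
    conv_comm (f 1) (f 0), conv_comm (f 2) (f 0), conv_comm (f 3) (f 0),
    conv_comm (ng (f 1)) (f 0), conv_comm (ng (f 2)) (f 0), conv_comm (ng (f 3)) (f 0)]
  try abel

lemma rd03 (f : Fin 4 → ZMod v → ℤ) :
    ∑ c, B f 0 c * (B f 3 c)ᵀ = 0 := by
  simp only [Fin.sum_univ_four, Bev00, Bev01, Bev02, Bev03, Bev30, Bev31, Bev32, Bev33,
    transpose_neg, bcirc_transpose, neg_mul, mul_neg, neg_neg,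
    mul1, mul2, mul3, mul4, corr_ng_ng, corr_ng_right, corr_ng_left, conv_ng_left,
    conv_comm (f 3) (f 1), conv_comm (f 2) (f 1), conv_comm (f 3) (f 2),
    conv_comm (f 1) (f 0), conv_comm (f 2) (f 0), conv_comm (f 3) (f 0),
    conv_comm (ng (f 1)) (f 0), conv_comm (ng (f 2)) (f 0), conv_comm (ng (f 3)) (f 0)]
  try abel

lemma rd10 (f : Fin 4 → ZMod v → ℤ) :
    ∑ c, B f 1 c * (B f 0 c)ᵀ = 0 := by
  simp only [Fin.sum_univ_four, Bev10, Bev11, Bev12, Bev13, Bev00, Bev01, Bev02, Bev03,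
    transpose_neg, bcirc_transpose, neg_mul, mul_neg, neg_neg,
    mul1, mul2, mul3, mul4, corr_ng_ng, corr_ng_right, corr_ng_left, conv_ng_left,
    conv_comm (f 3) (f 1), conv_comm (f 2) (f 1), conv_comm (f 3) (f 2),
    conv_comm (f 1) (f 0), conv_comm (f 2) (f 0), conv_comm (f 3) (f 0),
    conv_comm (ng (f 1)) (f 0), conv_comm (ng (f 2)) (f 0), conv_comm (ng (f 3)) (f 0)]
  try abel

lemma rd11 (f : Fin 4 → ZMod v → ℤ) :
    ∑ c, B f 1 c * (B f 1 c)ᵀ = circ (corr (f 0) (f 0)) + circ (corr (f 1) (f 1)) + circ (corr (f 2) (f 2)) + circ (corr (f 3) (f 3)) := by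
  simp only [Fin.sum_univ_four, Bev10, Bev11, Bev12, Bev13, Bev10, Bev11, Bev12, Bev13,
    transpose_neg, bcirc_transpose, neg_mul, mul_neg, neg_neg,
    mul1, mul2, mul3, mul4, corr_ng_ng, corr_ng_right, corr_ng_left, conv_ng_left,
    conv_comm (f 3) (f 1), conv_comm (f 2) (f 1), conv_comm (f 3) (f 2),
    conv_comm (f 1) (f 0), conv_comm (f 2) (f 0), conv_comm (f 3) (f 0),
    conv_comm (ng (f 1)) (f 0), conv_comm (ng (f 2)) (f 0), conv_comm (ng (f 3)) (f 0)]
  try abel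

lemma rd12 (f : Fin 4 → ZMod v → ℤ) :
    ∑ c, B f 1 c * (B f 2 c)ᵀ = 0 := by
  simp only [Fin.sum_univ_four, Bev10, Bev11, Bev12, Bev13, Bev20, Bev21, Bev22, Bev23,
    transpose_neg, bcirc_transpose, neg_mul, mul_neg, neg_neg,
    mul1, mul2, mul3, mul4, corr_ng_ng, corr_ng_right, corr_ng_left, conv_ng_left,
    conv_comm (f 3) (f 1), conv_comm (f 2) (f 1), conv_comm (f 3) (f 2),
    conv_comm (f 1) (f 0), conv_comm (f 2) (f 0), conv_comm (f 3) (f 0),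
    conv_comm (ng (f 1)) (f 0), conv_comm (ng (f 2)) (f 0), conv_comm (ng (f 3)) (f 0)]
  try abel

lemma rd13 (f : Fin 4 → ZMod v → ℤ) :
    ∑ c, B f 1 c * (B f 3 c)ᵀ = 0 := by
  simp only [Fin.sum_univ_four, Bev10, Bev11, Bev12, Bev13, Bev30, Bev31, Bev32, Bev33,
    transpose_neg, bcirc_transpose, neg_mul, mul_neg, neg_neg,
    mul1, mul2, mul3, mul4, corr_ng_ng, corr_ng_right, corr_ng_left, conv_ng_left,
    conv_comm (f 3) (f 1), conv_comm (f 2) (f 1), conv_comm (f 3) (f 2),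
    conv_comm (f 1) (f 0), conv_comm (f 2) (f 0), conv_comm (f 3) (f 0),
    conv_comm (ng (f 1)) (f 0), conv_comm (ng (f 2)) (f 0), conv_comm (ng (f 3)) (f 0)]
  try abel

lemma rd20 (f : Fin 4 → ZMod v → ℤ) :
    ∑ c, B f 2 c * (B f 0 c)ᵀ = 0 := by
  simp only [Fin.sum_univ_four, Bev20, Bev21, Bev22, Bev23, Bev00, Bev01, Bev02, Bev03,
    transpose_neg, bcirc_transpose, neg_mul, mul_neg, neg_neg,
    mul1, mul2, mul3, mul4, corr_ng_ng, corr_ng_right, corr_ng_left, conv_ng_left,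
    conv_comm (f 3) (f 1), conv_comm (f 2) (f 1), conv_comm (f 3) (f 2),
    conv_comm (f 1) (f 0), conv_comm (f 2) (f 0), conv_comm (f 3) (f 0),
    conv_comm (ng (f 1)) (f 0), conv_comm (ng (f 2)) (f 0), conv_comm (ng (f 3)) (f 0)]
  try abel

lemma rd21 (f : Fin 4 → ZMod v → ℤ) :
    ∑ c, B f 2 c * (B f 1 c)ᵀ = 0 := by
  simp only [Fin.sum_univ_four, Bev20, Bev21, Bev22, Bev23, Bev10, Bev11, Bev12, Bev13,
    transpose_neg, bcirc_transpose, neg_mul, mul_neg, neg_neg,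
    mul1, mul2, mul3, mul4, corr_ng_ng, corr_ng_right, corr_ng_left, conv_ng_left,
    conv_comm (f 3) (f 1), conv_comm (f 2) (f 1), conv_comm (f 3) (f 2),
    conv_comm (f 1) (f 0), conv_comm (f 2) (f 0), conv_comm (f 3) (f 0),
    conv_comm (ng (f 1)) (f 0), conv_comm (ng (f 2)) (f 0), conv_comm (ng (f 3)) (f 0)]
  try abel

lemma rd22 (f : Fin 4 → ZMod v → ℤ) :
    ∑ c, B f 2 c * (B f 2 c)ᵀ = circ (corr (f 0) (f 0)) + circ (corr (f 1) (f 1)) + circ (corr (f 2) (f 2)) + circ (corr (f 3) (f 3)) := by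
  simp only [Fin.sum_univ_four, Bev20, Bev21, Bev22, Bev23, Bev20, Bev21, Bev22, Bev23,
    transpose_neg, bcirc_transpose, neg_mul, mul_neg, neg_neg,
    mul1, mul2, mul3, mul4, corr_ng_ng, corr_ng_right, corr_ng_left, conv_ng_left,
    conv_comm (f 3) (f 1), conv_comm (f 2) (f 1), conv_comm (f 3) (f 2),
    conv_comm (f 1) (f 0), conv_comm (f 2) (f 0), conv_comm (f 3) (f 0),
    conv_comm (ng (f 1)) (f 0), conv_comm (ng (f 2)) (f 0), conv_comm (ng (f 3)) (f 0)]
  try abel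

lemma rd23 (f : Fin 4 → ZMod v → ℤ) :
    ∑ c, B f 2 c * (B f 3 c)ᵀ = 0 := by
  simp only [Fin.sum_univ_four, Bev20, Bev21, Bev22, Bev23, Bev30, Bev31, Bev32, Bev33,
    transpose_neg, bcirc_transpose, neg_mul, mul_neg, neg_neg,
    mul1, mul2, mul3, mul4, corr_ng_ng, corr_ng_right, corr_ng_left, conv_ng_left,
    conv_comm (f 3) (f 1), conv_comm (f 2) (f 1), conv_comm (f 3) (f 2),
    conv_comm (f 1) (f 0), conv_comm (f 2) (f 0), conv_comm (f 3) (f 0),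
    conv_comm (ng (f 1)) (f 0), conv_comm (ng (f 2)) (f 0), conv_comm (ng (f 3)) (f 0)]
  try abel

lemma rd30 (f : Fin 4 → ZMod v → ℤ) :
    ∑ c, B f 3 c * (B f 0 c)ᵀ = 0 := by
  simp only [Fin.sum_univ_four, Bev30, Bev31, Bev32, Bev33, Bev00, Bev01, Bev02, Bev03,
    transpose_neg, bcirc_transpose, neg_mul, mul_neg, neg_neg,
    mul1, mul2, mul3, mul4, corr_ng_ng, corr_ng_right, corr_ng_left, conv_ng_left,
    conv_comm (f 3) (f 1), conv_comm (f 2) (f 1), conv_comm (f 3) (f 2),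
    conv_comm (f 1) (f 0), conv_comm (f 2) (f 0), conv_comm (f 3) (f 0),
    conv_comm (ng (f 1)) (f 0), conv_comm (ng (f 2)) (f 0), conv_comm (ng (f 3)) (f 0)]
  try abel

lemma rd31 (f : Fin 4 → ZMod v → ℤ) :
    ∑ c, B f 3 c * (B f 1 c)ᵀ = 0 := by
  simp only [Fin.sum_univ_four, Bev30, Bev31, Bev32, Bev33, Bev10, Bev11, Bev12, Bev13,
    transpose_neg, bcirc_transpose, neg_mul, mul_neg, neg_neg,
    mul1, mul2, mul3, mul4, corr_ng_ng, corr_ng_right, corr_ng_left, conv_ng_left,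
    conv_comm (f 3) (f 1), conv_comm (f 2) (f 1), conv_comm (f 3) (f 2),
    conv_comm (f 1) (f 0), conv_comm (f 2) (f 0), conv_comm (f 3) (f 0),
    conv_comm (ng (f 1)) (f 0), conv_comm (ng (f 2)) (f 0), conv_comm (ng (f 3)) (f 0)]
  try abel

lemma rd32 (f : Fin 4 → ZMod v → ℤ) :
    ∑ c, B f 3 c * (B f 2 c)ᵀ = 0 := by
  simp only [Fin.sum_univ_four, Bev30, Bev31, Bev32, Bev33, Bev20, Bev21, Bev22, Bev23,
    transpose_neg, bcirc_transpose, neg_mul, mul_neg, neg_neg,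
    mul1, mul2, mul3, mul4, corr_ng_ng, corr_ng_right, corr_ng_left, conv_ng_left,
    conv_comm (f 3) (f 1), conv_comm (f 2) (f 1), conv_comm (f 3) (f 2),
    conv_comm (f 1) (f 0), conv_comm (f 2) (f 0), conv_comm (f 3) (f 0),
    conv_comm (ng (f 1)) (f 0), conv_comm (ng (f 2)) (f 0), conv_comm (ng (f 3)) (f 0)]
  try abel

lemma rd33 (f : Fin 4 → ZMod v → ℤ) :
    ∑ c, B f 3 c * (B f 3 c)ᵀ = circ (corr (f 0) (f 0)) + circ (corr (f 1) (f 1)) + circ (corr (f 2) (f 2)) + circ (corr (f 3) (f 3)) := by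
  simp only [Fin.sum_univ_four, Bev30, Bev31, Bev32, Bev33, Bev30, Bev31, Bev32, Bev33,
    transpose_neg, bcirc_transpose, neg_mul, mul_neg, neg_neg,
    mul1, mul2, mul3, mul4, corr_ng_ng, corr_ng_right, corr_ng_left, conv_ng_left,
    conv_comm (f 3) (f 1), conv_comm (f 2) (f 1), conv_comm (f 3) (f 2),
    conv_comm (f 1) (f 0), conv_comm (f 2) (f 0), conv_comm (f 3) (f 0),
    conv_comm (ng (f 1)) (f 0), conv_comm (ng (f 2)) (f 0), conv_comm (ng (f 3)) (f 0)]
  try abel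

lemma rowdiag (f : Fin 4 → ZMod v → ℤ) (a : Fin 4) :
    ∑ c, B f a c * (B f a c)ᵀ = circ (corr (f 0) (f 0)) + circ (corr (f 1) (f 1)) + circ (corr (f 2) (f 2)) + circ (corr (f 3) (f 3)) := by
  fin_cases a
  · exact rd00 f
  · exact rd11 f
  · exact rd22 f
  · exact rd33 f

lemma rowoff (f : Fin 4 → ZMod v → ℤ) (a b : Fin 4) (hab : a ≠ b) :
    ∑ c, B f a c * (B f b c)ᵀ = 0 := by
  fin_cases a <;> fin_cases b
  case _ => exact absurd rfl hab
  case _ => exact rd01 f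
  case _ => exact rd02 f
  case _ => exact rd03 f
  case _ => exact rd10 f
  case _ => exact absurd rfl hab
  case _ => exact rd12 f
  case _ => exact rd13 f
  case _ => exact rd20 f
  case _ => exact rd21 f
  case _ => exact absurd rfl hab
  case _ => exact rd23 f
  case _ => exact rd30 f
  case _ => exact rd31 f
  case _ => exact rd32 f
  case _ => exact absurd rfl hab

lemma addoff (f : Fin 4 → ZMod v → ℤ) (a b : Fin 4) (hab : a ≠ b) :
    B f a b + (B f b a)ᵀ = 0 := by
  fin_cases a <;> fin_cases b <;>
    first
      | exact absurd rfl hab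
      | simp

lemma adddiag (f : Fin 4 → ZMod v → ℤ) (a : Fin 4) : B f a a = circ (f 0) := by
  fin_cases a <;> rfl

end GSaux

theorem stmt5 {v : ℕ} (hv : 0 < v) (hvodd : Odd v)
    (X : Fin 4 → Finset (ZMod v)) (k : Fin 4 → ℕ) (lam : ℕ)
    (hlam : (lam : ℤ) = (∑ i, (k i : ℤ)) - v)
    (h : IsSDS X k lam)
    (hskew : ∀ i : ZMod v, i ≠ 0 → Xor' (i ∈ X 0) (-i ∈ X 0)) :
    ∃ H : Matrix (Fin (4 * v)) (Fin (4 * v)) ℤ,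
      (∀ i j, H i j = 1 ∨ H i j = -1) ∧
      H * Hᵀ = (4 * v : ℤ) • (1 : Matrix (Fin (4 * v)) (Fin (4 * v)) ℤ) ∧
      H + Hᵀ = (2 : ℤ) • (1 : Matrix (Fin (4 * v)) (Fin (4 * v)) ℤ) := by
  classical
  have hvz : NeZero v := ⟨hv.ne'⟩
  set base : Fin 4 → ZMod v → ℤ := fun i w => if w ∈ X i then -1 else 1 with hbase
  set sg : Fin 4 → ℤ := fun i => if i = 0 ∧ (0 : ZMod v) ∈ X 0 then -1 else 1 with hsg
  set f : Fin 4 → ZMod v → ℤ := fun i w => sg i * base i w with hf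
  have pm : ∀ i w, f i w = 1 ∨ f i w = -1 := by
    intro i w; simp only [hf, hsg, hbase]; split_ifs <;> norm_num
  have negpm : ∀ z : ℤ, (z = 1 ∨ z = -1) → (-z = 1 ∨ -z = -1) := by
    rintro z (rfl | rfl) <;> norm_num
  have hsq : ∀ i w, f i w * f i w = 1 := by
    intro i w; rcases pm i w with hh | hh <;> rw [hh] <;> norm_num
  have hf00 : f 0 0 = 1 := by
    by_cases h0 : (0 : ZMod v) ∈ X 0 <;> simp [hf, hsg, hbase, h0]
  have hf0neg : ∀ c : ZMod v, c ≠ 0 → f 0 (-c) = -f 0 c := by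
    intro c hc
    rcases hskew c hc with ⟨h1, h2⟩ | ⟨h1, h2⟩ <;> by_cases h0 : (0 : ZMod v) ∈ X 0 <;>
      simp [hf, hsg, hbase, h1, h2, h0]
  -- counting
  have hN : ∀ (i : Fin 4) (c : ZMod v),
      (Finset.univ.filter fun w : ZMod v => w ∈ X i ∧ w - c ∈ X i).card
        = ((X i ×ˢ X i).filter fun p => p.1 - p.2 = c).card := by
    intro i c
    refine Finset.card_bij' (fun w _ => (w, w - c)) (fun p _ => p.1) ?_ ?_ ?_ ?_
    · intro w hw
      simp only [Finset.mem_filter, Finset.mem_univ, true_and] at hw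
      simp only [Finset.mem_filter, Finset.mem_product]
      exact ⟨⟨hw.1, hw.2⟩, by abel⟩
    · intro p hp
      simp only [Finset.mem_filter, Finset.mem_product] at hp
      simp only [Finset.mem_filter, Finset.mem_univ, true_and]
      have hp2 : p.1 - c = p.2 := by rw [← hp.2]; abel
      exact ⟨hp.1.1, by rw [hp2]; exact hp.1.2⟩
    · intro w hw; rfl
    · intro p hp
      simp only [Finset.mem_filter, Finset.mem_product] at hp
      have hp2 : p.1 - c = p.2 := by rw [← hp.2]; abel
      exact Prod.ext rfl hp2
  have hcorr : ∀ (i : Fin 4) (c : ZMod v),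
      GSaux.corr (base i) (base i) c
        = (v : ℤ) - 4 * k i + 4 * (((X i ×ˢ X i).filter fun p => p.1 - p.2 = c).card : ℤ) := by
    intro i c
    have hindk : ∀ (g : ZMod v → ZMod v), Function.Bijective g →
        (∑ w : ZMod v, (if g w ∈ X i then (1 : ℤ) else 0)) = (k i : ℤ) := by
      intro g hg
      rw [Function.Bijective.sum_comp hg (fun u => if u ∈ X i then (1 : ℤ) else 0)]
      rw [Finset.sum_boole]
      rw [Finset.filter_univ_mem]
      exact_mod_cast h.1 i
    have e1 : (∑ w : ZMod v, (if w ∈ X i then (1 : ℤ) else 0)) = (k i : ℤ) :=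
      hindk id Function.bijective_id
    have e2 : (∑ w : ZMod v, (if w - c ∈ X i then (1 : ℤ) else 0)) = (k i : ℤ) :=
      hindk (fun w => w - c) (Equiv.subRight c).bijective
    have e3 : (∑ w : ZMod v,
        (if w ∈ X i then (1 : ℤ) else 0) * (if w - c ∈ X i then (1 : ℤ) else 0))
        = (((X i ×ˢ X i).filter fun p => p.1 - p.2 = c).card : ℤ) := by
      rw [← hN i c]
      rw [show (fun w : ZMod v =>
          (if w ∈ X i then (1 : ℤ) else 0) * (if w - c ∈ X i then (1 : ℤ) else 0))
          = fun w => if w ∈ X i ∧ w - c ∈ X i then (1 : ℤ) else 0 by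
        funext w; split_ifs with h1 h2 h3 <;> simp_all]
      rw [Finset.sum_boole]
    have expand : ∀ w : ZMod v, base i w * base i (w - c)
        = 1 - 2 * (if w ∈ X i then (1 : ℤ) else 0) - 2 * (if w - c ∈ X i then (1 : ℤ) else 0)
          + 4 * ((if w ∈ X i then (1 : ℤ) else 0) * (if w - c ∈ X i then (1 : ℤ) else 0)) := by
      intro w; simp only [hbase]; split_ifs <;> ring
    have hv' : (∑ _w : ZMod v, (1 : ℤ)) = (v : ℤ) := by
      simp [Finset.card_univ, ZMod.card]
    unfold GSaux.corr
    rw [Finset.sum_congr rfl fun w _ => expand w]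
    rw [Finset.sum_add_distrib, Finset.sum_sub_distrib, Finset.sum_sub_distrib,
      ← Finset.mul_sum, ← Finset.mul_sum, ← Finset.mul_sum, hv', e1, e2, e3]
    ring
  have hsign : ∀ i, GSaux.corr (f i) (f i) = GSaux.corr (base i) (base i) := by
    intro i
    funext c
    unfold GSaux.corr
    refine Finset.sum_congr rfl fun w _ => ?_
    have hs : sg i * sg i = 1 := by simp only [hsg]; split_ifs <;> norm_num
    simp only [hf]
    rw [mul_mul_mul_comm, hs, one_mul]
  have hP4 : ∀ c : ZMod v, c ≠ 0 →
      GSaux.corr (f 0) (f 0) c + GSaux.corr (f 1) (f 1) c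
        + GSaux.corr (f 2) (f 2) c + GSaux.corr (f 3) (f 3) c = 0 := by
    intro c hc
    rw [hsign 0, hsign 1, hsign 2, hsign 3, hcorr 0 c, hcorr 1 c, hcorr 2 c, hcorr 3 c]
    have hsum := h.2 c hc
    rw [Fin.sum_univ_four] at hsum
    have hsum' : (((X 0 ×ˢ X 0).filter fun p => p.1 - p.2 = c).card : ℤ)
        + (((X 1 ×ˢ X 1).filter fun p => p.1 - p.2 = c).card : ℤ)
        + (((X 2 ×ˢ X 2).filter fun p => p.1 - p.2 = c).card : ℤ)
        + (((X 3 ×ˢ X 3).filter fun p => p.1 - p.2 = c).card : ℤ) = (lam : ℤ) := by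
      exact_mod_cast congrArg (Nat.cast : ℕ → ℤ) hsum
    rw [Fin.sum_univ_four] at hlam
    linarith
  have hdiag0 : ∀ i, GSaux.corr (f i) (f i) 0 = (v : ℤ) := by
    intro i
    unfold GSaux.corr
    simp only [sub_zero]
    rw [Finset.sum_congr rfl fun w _ => hsq i w]
    simp [Finset.card_univ, ZMod.card]
  -- the big matrix on the product type
  let H' : Matrix (Fin 4 × ZMod v) (Fin 4 × ZMod v) ℤ :=
    fun p q => GSaux.B f p.1 q.1 p.2 q.2
  have Hpm : ∀ p q, H' p q = 1 ∨ H' p q = -1 := by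
    rintro ⟨a, x⟩ ⟨b, y⟩
    show GSaux.B f a b x y = 1 ∨ GSaux.B f a b x y = -1
    fin_cases a <;> fin_cases b <;>
      simp only [GSaux.Bev00, GSaux.Bev01, GSaux.Bev02, GSaux.Bev03, GSaux.Bev10,
        GSaux.Bev11, GSaux.Bev12, GSaux.Bev13, GSaux.Bev20, GSaux.Bev21, GSaux.Bev22,
        GSaux.Bev23, GSaux.Bev30, GSaux.Bev31, GSaux.Bev32, GSaux.Bev33,
        GSaux.circ, GSaux.bcirc, GSaux.ng, Matrix.of_apply, Matrix.neg_apply] <;>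
      first
        | exact pm _ _
        | exact negpm _ (pm _ _)
  have hmul : H' * H'ᵀ = (4 * v : ℤ) • 1 := by
    ext p q
    obtain ⟨a, x⟩ := p
    obtain ⟨b, y⟩ := q
    rw [Matrix.mul_apply]
    have step : (∑ j, H' (a, x) j * H'ᵀ j (b, y))
        = (∑ c, GSaux.B f a c * (GSaux.B f b c)ᵀ) x y := by
      rw [Matrix.sum_apply]
      rw [Fintype.sum_prod_type]
      refine Finset.sum_congr rfl fun c _ => ?_
      rw [Matrix.mul_apply]
      exact Finset.sum_congr rfl fun z _ => rfl
    rw [step]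
    by_cases hab : a = b
    · subst hab
      rw [GSaux.rowdiag]
      by_cases hxy : x = y
      · subst hxy
        have hcent : (GSaux.circ (GSaux.corr (f 0) (f 0)) + GSaux.circ (GSaux.corr (f 1) (f 1))
            + GSaux.circ (GSaux.corr (f 2) (f 2)) + GSaux.circ (GSaux.corr (f 3) (f 3))) x x
            = 4 * (v : ℤ) := by
          simp only [Matrix.add_apply, GSaux.circ, Matrix.of_apply, sub_self, hdiag0]
          ring
        rw [hcent]
        simp [Matrix.one_apply]
      · have hc : x - y ≠ 0 := sub_ne_zero.2 hxy
        have hz : (GSaux.circ (GSaux.corr (f 0) (f 0)) + GSaux.circ (GSaux.corr (f 1) (f 1))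
            + GSaux.circ (GSaux.corr (f 2) (f 2)) + GSaux.circ (GSaux.corr (f 3) (f 3))) x y
            = 0 := by
          simp only [Matrix.add_apply, GSaux.circ, Matrix.of_apply]
          exact hP4 (x - y) hc
        rw [hz]
        have hr : ((4 * v : ℤ) • (1 : Matrix (Fin 4 × ZMod v) (Fin 4 × ZMod v) ℤ))
            (a, x) (a, y) = 0 := by
          simp [Matrix.one_apply, Prod.ext_iff, hxy]
        rw [hr]
    · rw [GSaux.rowoff f a b hab]
      simp [Matrix.one_apply, Prod.ext_iff, hab]
  have hadd : H' + H'ᵀ = (2 : ℤ) • 1 := by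
    ext p q
    obtain ⟨a, x⟩ := p
    obtain ⟨b, y⟩ := q
    have lhs : (H' + H'ᵀ) (a, x) (b, y) = (GSaux.B f a b + (GSaux.B f b a)ᵀ) x y := rfl
    rw [lhs]
    by_cases hab : a = b
    · subst hab
      rw [GSaux.adddiag f a]
      by_cases hxy : x = y
      · subst hxy
        have hd : (GSaux.circ (f 0) + (GSaux.circ (f 0))ᵀ) x x = 2 := by
          simp [GSaux.circ, Matrix.add_apply, Matrix.transpose_apply, sub_self, hf00]
        rw [hd]
        simp [Matrix.one_apply]
      · have h1 : y - x = -(x - y) := by abel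
        have hd : (GSaux.circ (f 0) + (GSaux.circ (f 0))ᵀ) x y = 0 := by
          simp only [Matrix.add_apply, GSaux.circ, Matrix.transpose_apply, Matrix.of_apply]
          rw [h1, hf0neg (x - y) (sub_ne_zero.2 hxy)]
          ring
        rw [hd]
        simp [Matrix.one_apply, Prod.ext_iff, hxy]
    · rw [GSaux.addoff f a b hab]
      simp [Matrix.one_apply, Prod.ext_iff, hab]
  -- transport along an equivalence
  have hcardeq : 4 * v = Fintype.card (Fin 4 × ZMod v) := by
    simp [ZMod.card]
  let e : Fin (4 * v) ≃ Fin 4 × ZMod v :=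
    (finCongr hcardeq).trans (Fintype.equivFin _).symm
  refine ⟨H'.submatrix e e, fun i j => Hpm _ _, ?_, ?_⟩
  · rw [Matrix.transpose_submatrix, Matrix.submatrix_mul_equiv, hmul]
    ext i j
    simp only [Matrix.submatrix_apply, Matrix.smul_apply, Matrix.one_apply, smul_eq_mul,
      mul_ite, mul_one, mul_zero, EmbeddingLike.apply_eq_iff_eq]
  · have hsplit : H'.submatrix e e + H'ᵀ.submatrix e e = (H' + H'ᵀ).submatrix e e := by
      rw [Matrix.submatrix_add]
      rfl
    rw [Matrix.transpose_submatrix, hsplit, hadd]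
    ext i j
    simp only [Matrix.submatrix_apply, Matrix.smul_apply, Matrix.one_apply, smul_eq_mul,
      mul_ite, mul_one, mul_zero, EmbeddingLike.apply_eq_iff_eq]
end

section
/- Let H = {1, 8, 43, 64, 79, 188, 228, 242, 279, 310, 339, 344, 512, 562, 587} ⊆ ℤ/631ℤ, and for k ∈ ℤ/631ℤ let H·k = {hk mod 631 : h ∈ H}. Define X = ⋃_{j ∈ J} H·j, Y = ⋃_{k ∈ K} H·k, Z = ⋃_{l ∈ L} H·l, W = ⋃_{m ∈ M} H·m where J = {1, 2, 3, 4, 6, 7, 12, 13, 14, 17, 19, 21, 26, 27, 31, 38, 42, 52, 62, 76, 124}, K = {1, 2, 3, 4, 5, 6, 7, 9, 12, 17, 23, 26, 27, 31, 33, 38, 42, 44, 52, 76, 78, 126}, L = {1, 2, 3, 4, 6, 7, 9, 11, 12, 13, 14, 17, 18, 19, 21, 29, 35, 46, 52, 62, 66, 76}, M = {1, 2, 3, 4, 5, 6, 12, 13, 14, 18, 19, 21, 22, 26, 27, 38, 39, 42, 63, 67, 92, 124}. Then X, Y, Z, W form supplementary difference sets with parameters (631; 315, 330, 330, 330; 674),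 and X is a skew subset of ℤ/631ℤ. -/
/-- The set `H = {1, 8, 43, 64, 79, 188, 228, 242, 279, 310, 339, 344, 512, 562, 587}` in `ℤ/631ℤ`. -/
def Hset : Finset (ZMod 631) := {1, 8, 43, 64, 79, 188, 228, 242, 279, 310, 339, 344, 512, 562, 587}

/-- The orbit `H·k = {h * k : h ∈ H}` of `H` through `k`. -/
def orb (k : ZMod 631) : Finset (ZMod 631) := Hset.image (fun h => h * k)

def Jset : Finset (ZMod 631) := {1, 2, 3, 4, 6, 7, 12, 13, 14, 17, 19, 21, 26, 27, 31, 38, 42, 52, 62, 76, 124}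
def Kset : Finset (ZMod 631) := {1, 2, 3, 4, 5, 6, 7, 9, 12, 17, 23, 26, 27, 31, 33, 38, 42, 44, 52, 76, 78, 126}
def Lset : Finset (ZMod 631) := {1, 2, 3, 4, 6, 7, 9, 11, 12, 13, 14, 17, 18, 19, 21, 29, 35, 46, 52, 62, 66, 76}
def Mset : Finset (ZMod 631) := {1, 2, 3, 4, 5, 6, 12, 13, 14, 18, 19, 21, 22, 26, 27, 38, 39, 42, 63, 67, 92, 124}

/-- `X = ⋃_{j ∈ J} H·j`. -/
def Xset : Finset (ZMod 631) := Jset.biUnion orb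
/-- `Y = ⋃_{k ∈ K} H·k`. -/
def Yset : Finset (ZMod 631) := Kset.biUnion orb
/-- `Z = ⋃_{l ∈ L} H·l`. -/
def Zset : Finset (ZMod 631) := Lset.biUnion orb
/-- `W = ⋃_{m ∈ M} H·m`. -/
def Wset : Finset (ZMod 631) := Mset.biUnion orb


set_option maxRecDepth 10000000
set_option maxHeartbeats 64000000

def mX : ℕ := 308972548954808927819549638654268292855290574056413293949554306532711632288563725310662660788620006955446695133187547685448246208266554137787796164331095601264473173333180021178892324434398
def mY : ℕ := 4983122840212014664004663971826169510448695462421615200631209677326246510576732460281827660069275445035381422334045955423240710830585264608597766480841899837724438401113119809859774893463550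
def mZ : ℕ := 2540916505839325368155975532099765703677465710170721928768880758257641510573813014578287208795737057981457150702525598761664468492171186005658322693187919384485773615599141821087505818058718
def mW : ℕ := 1701318644497222579778900376907100744789837728996016677250458759320977413502531308347753922125417040499060237831008271124294005964478102369527534254727024532118823623543986366493018090762622

def chi (m i : ℕ) : ℕ := (m >>> i) % 2

lemma chi01 (m i : ℕ) : chi m i = 0 ∨ chi m i = 1 := Nat.mod_two_eq_zero_or_one _

def cardAux (m : ℕ) : ℕ → ℕ
  | 0 => 0
  | (i+1) => chi m i + cardAux m i

lemma cardAux_eq (m : ℕ) : ∀ n, cardAux m n = ∑ i ∈ Finset.range n, chi m i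
  | 0 => rfl
  | (n+1) => by rw [Finset.sum_range_succ, cardAux, cardAux_eq m n]; ring

def fmAux (m d : ℕ) : ℕ → ℕ
  | 0 => 0
  | (i+1) => chi m ((i + d) % 631) * chi m i + fmAux m d i

lemma fmAux_eq (m d : ℕ) : ∀ n, fmAux m d n = ∑ i ∈ Finset.range n, chi m ((i + d) % 631) * chi m i
  | 0 => rfl
  | (n+1) => by rw [Finset.sum_range_succ, fmAux, fmAux_eq m d n]; ring

lemma sum_val (g : ℕ → ℕ) : ∑ a : ZMod 631, g a.val = ∑ i ∈ Finset.range 631, g i := by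
  refine Finset.sum_nbij' (fun a => ZMod.val a) (fun i => (i : ZMod 631)) ?_ ?_ ?_ ?_ ?_
  · intro a _; exact Finset.mem_range.mpr (ZMod.val_lt a)
  · intro i _; exact Finset.mem_univ _
  · intro a _; show ((ZMod.val a : ℕ) : ZMod 631) = a; rw [ZMod.natCast_val, ZMod.cast_id]
  · intro i hi; exact ZMod.val_cast_of_lt (Finset.mem_range.mp hi)
  · intro a _; rfl

lemma indicator_eq (S : Finset (ZMod 631)) (m : ℕ)
    (hm : ∀ a, a ∈ S ↔ chi m a.val = 1) (a : ZMod 631) :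
    chi m a.val = if a ∈ S then 1 else 0 := by
  rcases chi01 m a.val with h | h <;> rw [h] <;> by_cases hs : a ∈ S <;>
    simp_all [hm a]

lemma card_eq (S : Finset (ZMod 631)) (m : ℕ)
    (hm : ∀ a, a ∈ S ↔ chi m a.val = 1) : S.card = cardAux m 631 := by
  rw [cardAux_eq, ← sum_val (chi m)]
  rw [show S = Finset.univ.filter (· ∈ S) by simp]
  rw [Finset.card_filter]
  refine Finset.sum_congr rfl fun a _ => ?_
  rw [indicator_eq S m hm a]

lemma pairs_eq (S : Finset (ZMod 631)) (c : ZMod 631) :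
    ((S ×ˢ S).filter fun p => p.1 - p.2 = c).card
      = (S.filter fun b => b + c ∈ S).card := by
  apply Finset.card_bij (fun p _ => p.2)
  · intro p hp
    simp only [Finset.mem_filter, Finset.mem_product] at hp ⊢
    obtain ⟨⟨h1, h2⟩, h3⟩ := hp
    refine ⟨h2, ?_⟩
    have : p.1 = p.2 + c := by rw [← h3]; ring
    rwa [← this]
  · intro p hp q hq h
    simp only [Finset.mem_filter, Finset.mem_product] at hp hq
    have h1 : p.1 = p.2 + c := by rw [← hp.2]; ring
    have h2 : q.1 = q.2 + c := by rw [← hq.2]; ring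
    exact Prod.ext (by rw [h1, h2, h]) h
  · intro b hb
    simp only [Finset.mem_filter] at hb
    exact ⟨(b + c, b), by simp [Finset.mem_filter, Finset.mem_product, hb.1, hb.2], rfl⟩

lemma count_eq (S : Finset (ZMod 631)) (m : ℕ)
    (hm : ∀ a, a ∈ S ↔ chi m a.val = 1) (c : ZMod 631) :
    ((S ×ˢ S).filter fun p => p.1 - p.2 = c).card = fmAux m c.val 631 := by
  rw [pairs_eq, fmAux_eq, ← sum_val (fun i => chi m ((i + c.val) % 631) * chi m i)]
  rw [show S.filter (fun b => b + c ∈ S) = Finset.univ.filter (fun b => b ∈ S ∧ b + c ∈ S) by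
    ext b; simp [Finset.mem_filter, and_comm]]
  rw [Finset.card_filter]
  refine Finset.sum_congr rfl fun a _ => ?_
  have h1 := indicator_eq S m hm a
  have h2 := indicator_eq S m hm (a + c)
  have hv : (a + c).val = (a.val + c.val) % 631 := ZMod.val_add a c
  rw [← hv, h1, h2]
  by_cases ha : a ∈ S <;> by_cases hb : a + c ∈ S <;> simp [ha, hb]

lemma count_symm (S : Finset (ZMod 631)) (c : ZMod 631) :
    ((S ×ˢ S).filter fun p => p.1 - p.2 = c).card
      = ((S ×ˢ S).filter fun p => p.1 - p.2 = -c).card := by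
  apply Finset.card_bij (fun p _ => (p.2, p.1))
  · intro p hp
    simp only [Finset.mem_filter, Finset.mem_product] at hp ⊢
    exact ⟨⟨hp.1.2, hp.1.1⟩, by rw [← hp.2]; ring⟩
  · intro p _ q _ h
    exact Prod.ext (congrArg Prod.snd h) (congrArg Prod.fst h)
  · intro b hb
    simp only [Finset.mem_filter, Finset.mem_product] at hb
    refine ⟨(b.2, b.1), ?_, rfl⟩
    simp only [Finset.mem_filter, Finset.mem_product]
    exact ⟨⟨hb.1.2, hb.1.1⟩, by have := hb.2; linear_combination -this⟩

def P (m : ℕ) : Finset (ZMod 631) := Finset.univ.filter (fun a => chi m a.val = 1)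

lemma mem_P (m : ℕ) (a : ZMod 631) : a ∈ P m ↔ chi m a.val = 1 := by
  simp [P]

lemma eqX : Xset = P mX := by decide +kernel
lemma eqY : Yset = P mY := by decide +kernel
lemma eqZ : Zset = P mZ := by decide +kernel
lemma eqW : Wset = P mW := by decide +kernel

lemma hmX : ∀ a, a ∈ Xset ↔ chi mX a.val = 1 := fun a => eqX ▸ mem_P mX a
lemma hmY : ∀ a, a ∈ Yset ↔ chi mY a.val = 1 := fun a => eqY ▸ mem_P mY a
lemma hmZ : ∀ a, a ∈ Zset ↔ chi mZ a.val = 1 := fun a => eqZ ▸ mem_P mZ a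
lemma hmW : ∀ a, a ∈ Wset ↔ chi mW a.val = 1 := fun a => eqW ▸ mem_P mW a

def total (d : ℕ) : ℕ := fmAux mX d 631 + fmAux mY d 631 + fmAux mZ d 631 + fmAux mW d 631

def allgoodFrom (lo : ℕ) : ℕ → Bool
  | 0 => true
  | (j+1) => (total (lo + j) == 674) && allgoodFrom lo j

lemma ag_spec (lo : ℕ) : ∀ n, allgoodFrom lo n = true → ∀ j, j < n → total (lo + j) = 674 := by
  intro n
  induction n with
  | zero => intro _ j hj; omega
  | succ n ih =>
    intro h j hj
    rw [allgoodFrom, Bool.and_eq_true, beq_iff_eq] at h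
    rcases Nat.lt_succ_iff_lt_or_eq.mp hj with h' | h'
    · exact ih h.2 j h'
    · rw [h']; exact h.1

lemma glue : ∀ (a lo b : ℕ), allgoodFrom (lo + b) a = true → allgoodFrom lo b = true →
    allgoodFrom lo (b + a) = true := by
  intro a
  induction a with
  | zero => intro lo b _ h; exact h
  | succ n ih =>
    intro lo b h1 h2
    rw [allgoodFrom, Bool.and_eq_true] at h1
    show allgoodFrom lo ((b + n) + 1) = true
    rw [allgoodFrom, Bool.and_eq_true]
    refine ⟨?_, ih lo b h1.2 h2⟩
    rw [show lo + (b + n) = lo + b + n by omega]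
    exact h1.1
lemma chunk0 : allgoodFrom 1 35 = true := by decide +kernel
lemma chunk1 : allgoodFrom 36 35 = true := by decide +kernel
lemma chunk2 : allgoodFrom 71 35 = true := by decide +kernel
lemma chunk3 : allgoodFrom 106 35 = true := by decide +kernel
lemma chunk4 : allgoodFrom 141 35 = true := by decide +kernel
lemma chunk5 : allgoodFrom 176 35 = true := by decide +kernel
lemma chunk6 : allgoodFrom 211 35 = true := by decide +kernel
lemma chunk7 : allgoodFrom 246 35 = true := by decide +kernel
lemma chunk8 : allgoodFrom 281 35 = true := by decide +kernel

lemma all315 : allgoodFrom 1 315 = true := by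
  have g0 := chunk0
  have g1 : allgoodFrom 1 70 = true := glue 35 1 35 chunk1 g0
  have g2 : allgoodFrom 1 105 = true := glue 35 1 70 chunk2 g1
  have g3 : allgoodFrom 1 140 = true := glue 35 1 105 chunk3 g2
  have g4 : allgoodFrom 1 175 = true := glue 35 1 140 chunk4 g3
  have g5 : allgoodFrom 1 210 = true := glue 35 1 175 chunk5 g4
  have g6 : allgoodFrom 1 245 = true := glue 35 1 210 chunk6 g5
  have g7 : allgoodFrom 1 280 = true := glue 35 1 245 chunk7 g6
  have g8 : allgoodFrom 1 315 = true := glue 35 1 280 chunk8 g7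
  exact g8

lemma total_eq (d : ℕ) (h1 : 1 ≤ d) (h2 : d ≤ 315) : total d = 674 := by
  have := ag_spec 1 315 all315 (d - 1) (by omega)
  rwa [show 1 + (d - 1) = d by omega] at this

def skAux : ℕ → Bool
  | 0 => true
  | (d+1) => (chi mX (d+1) + chi mX (631 - (d+1)) == 1) && skAux d

lemma sk_spec : ∀ n, skAux n = true → ∀ d, 1 ≤ d → d ≤ n → chi mX d + chi mX (631 - d) = 1 := by
  intro n
  induction n with
  | zero => intro _ d h1 h2; omega
  | succ n ih =>
    intro h d h1 h2
    rw [skAux, Bool.and_eq_true, beq_iff_eq] at h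
    rcases Nat.lt_succ_iff_lt_or_eq.mp (Nat.lt_succ_of_le h2) with h' | h'
    · exact ih h.2 d h1 (by omega)
    · rw [h']; exact h' ▸ h.1

lemma skAll : skAux 630 = true := by decide +kernel

lemma cardX : cardAux mX 631 = 315 := by decide +kernel
lemma cardY : cardAux mY 631 = 330 := by decide +kernel
lemma cardZ : cardAux mZ 631 = 330 := by decide +kernel
lemma cardW : cardAux mW 631 = 330 := by decide +kernel

theorem stmt14 :
    IsSDS ![Xset, Yset, Zset, Wset] ![315, 330, 330, 330] 674 ∧
      ∀ i : ZMod 631, i ≠ 0 → Xor' (i ∈ Xset) (-i ∈ Xset) := by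
  constructor
  · constructor
    · intro i
      fin_cases i
      · exact (card_eq Xset mX hmX).trans cardX
      · exact (card_eq Yset mY hmY).trans cardY
      · exact (card_eq Zset mZ hmZ).trans cardZ
      · exact (card_eq Wset mW hmW).trans cardW
    · intro c hc
      have hv0 : c.val ≠ 0 := fun h => hc ((ZMod.val_eq_zero c).mp h)
      have hvlt : c.val < 631 := ZMod.val_lt c
      rw [Fin.sum_univ_four]
      simp only [Matrix.cons_val_zero, Matrix.cons_val_one, Matrix.head_cons,
        Matrix.cons_val_two, Matrix.tail_cons, Matrix.cons_val_three]
      by_cases hle : c.val ≤ 315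
      · rw [count_eq Xset mX hmX c, count_eq Yset mY hmY c,
          count_eq Zset mZ hmZ c, count_eq Wset mW hmW c]
        exact total_eq c.val (by omega) hle
      · have hcn : (-c).val = 631 - c.val := by
          rw [ZMod.neg_val]; simp [hc]
        rw [count_symm Xset c, count_symm Yset c, count_symm Zset c, count_symm Wset c]
        rw [count_eq Xset mX hmX (-c), count_eq Yset mY hmY (-c),
          count_eq Zset mZ hmZ (-c), count_eq Wset mW hmW (-c)]
        rw [hcn]
        exact total_eq (631 - c.val) (by omega) (by omega)
  · intro i hi
    have hv0 : i.val ≠ 0 := fun h => hi ((ZMod.val_eq_zero i).mp h)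
    have hvlt : i.val < 631 := ZMod.val_lt i
    have hneg : (-i).val = 631 - i.val := by
      rw [ZMod.neg_val]; simp [hi]
    have key := sk_spec 630 skAll i.val (by omega) (by omega)
    have h1 := hmX i
    have h2 := hmX (-i)
    rw [hneg] at h2
    rcases chi01 mX i.val with e | e <;> rcases chi01 mX (631 - i.val) with f | f <;>
      rw [e, f] at key <;> try omega
    · exact Or.inr ⟨h2.mpr f, fun h => by have := h1.mp h; omega⟩
    · exact Or.inl ⟨h1.mpr e, fun h => by have := h2.mp h; omega⟩
end
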